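/- (Theorem 1) Let f₁, …, f_k : Finset V → ℝ be nonnegative monotone submodular with f_i(∅)=0, f = ∑ i f_i, and H : ℝ → ℝ nonnegative nondecreasing concave with H(0)=0. If Ŝ is the output of the greedy algorithm with budget B maximizing g(S) = ∑ i H(f_i(S)), and S* is an optimal solution of max_{|S| ≤ B} f(S), then g(Ŝ) ≥ (1 - 1/e) · H(f(S*)). -/

import Mathlib

open Finset

/-- For a concave function on `[0,∞)`, increments over intervals of equal
length decrease as the interval shifts right. -/
private lemma conc_shift {H : ℝ → ℝ} (hHconc : ConcaveOn ℝ (Set.Ici (0:ℝ)) H)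
    {x y d : ℝ} (hx : 0 ≤ x) (hxy : x ≤ y) (hd : 0 ≤ d) :
    H (y + d) - H y ≤ H (x + d) - H x := by
  rcases eq_or_lt_of_le (show x ≤ y + d by linarith) with h | h
  · have hyx : y = x := le_antisymm (by linarith) hxy
    have hd0 : d = 0 := by linarith
    simp [hyx, hd0]
  · set L := y + d - x with hL
    have hLpos : 0 < L := by simp only [hL]; linarith
    have hLne : L ≠ 0 := ne_of_gt hLpos
    have hs : 0 ≤ (y - x) / L := div_nonneg (by linarith) hLpos.le
    have ht : 0 ≤ d / L := div_nonneg hd hLpos.le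
    have hst : (y - x) / L + d / L = 1 := by field_simp; simp [hL]; ring
    have hyd : (0:ℝ) ≤ y + d := by linarith
    have h1 := hHconc.2 (Set.mem_Ici.mpr hx) (Set.mem_Ici.mpr hyd) hs ht hst
    have h2 := hHconc.2 (Set.mem_Ici.mpr hx) (Set.mem_Ici.mpr hyd) ht hs
      (by linarith)
    simp only [smul_eq_mul] at h1 h2
    have e1 : (y - x) / L * x + d / L * (y + d) = x + d := by
      field_simp; simp only [hL]; ring
    have e2 : d / L * x + (y - x) / L * (y + d) = y := by
      field_simp; simp only [hL]; ring
    rw [e1] at h1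
    rw [e2] at h2
    have k1 : (y - x) / L * H x + d / L * H x = H x := by
      rw [← add_mul, hst, one_mul]
    have k2 : (y - x) / L * H (y + d) + d / L * H (y + d) = H (y + d) := by
      rw [← add_mul, hst, one_mul]
    linarith

private lemma H_sum_le {H : ℝ → ℝ} (hHconc : ConcaveOn ℝ (Set.Ici (0:ℝ)) H)
    (hH0 : H 0 = 0) {ι : Type*} [DecidableEq ι] (s : Finset ι) (x : ι → ℝ)
    (hx : ∀ i, 0 ≤ x i) :
    H (∑ i ∈ s, x i) ≤ ∑ i ∈ s, H (x i) := by
  induction s using Finset.induction_on with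
  | empty => simp [hH0]
  | insert _ _ ha ih =>
    rename_i a s'
    rw [Finset.sum_insert ha, Finset.sum_insert ha]
    have hsum : 0 ≤ ∑ i ∈ s', x i := Finset.sum_nonneg fun i _ => hx i
    have key := conc_shift hHconc (le_refl (0:ℝ)) hsum (hx a)
    -- H (∑ + x a) - H ∑ ≤ H (0 + x a) - H 0
    rw [zero_add, hH0, sub_zero, add_comm] at key
    linarith

theorem stmt_7 {V : Type*} [Fintype V] [DecidableEq V] {k : ℕ}
    (f : Fin k → Finset V → ℝ) (H : ℝ → ℝ) (B : ℕ) (hB : 1 ≤ B)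
    (hfnonneg : ∀ i S, 0 ≤ f i S)
    (hfmono : ∀ i, ∀ A B : Finset V, A ⊆ B → f i A ≤ f i B)
    (hfsub : ∀ i, ∀ A B : Finset V, A ⊆ B → ∀ a ∉ B,
      f i (insert a A) - f i A ≥ f i (insert a B) - f i B)
    (hfempty : ∀ i, f i ∅ = 0)
    (hHnonneg : ∀ z ∈ Set.Ici (0 : ℝ), 0 ≤ H z)
    (hHmono : MonotoneOn H (Set.Ici (0 : ℝ)))
    (hHconc : ConcaveOn ℝ (Set.Ici (0 : ℝ)) H)
    (hH0 : H 0 = 0)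
    -- greedy algorithm on g(S) = ∑ i, H (f i S)
    (Shat : ℕ → Finset V)
    (h0 : Shat 0 = ∅)
    (hstep : ∀ t, ∃ a, Shat (t + 1) = insert a (Shat t) ∧
      ∀ b, (∑ i, H (f i (insert b (Shat t)))) ≤ (∑ i, H (f i (insert a (Shat t)))))
    -- S* optimal for f = ∑ i f i under budget B
    (Sstar : Finset V) (hScard : Sstar.card ≤ B)
    (hSopt : ∀ S : Finset V, S.card ≤ B → (∑ i, f i S) ≤ (∑ i, f i Sstar)) :
    (∑ i, H (f i (Shat B))) ≥ (1 - 1 / Real.exp 1) * H (∑ i, f i Sstar) := by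
  set g : Finset V → ℝ := fun S => ∑ i, H (f i S) with hg
  -- monotonicity of g
  have hgmono : ∀ A C : Finset V, A ⊆ C → g A ≤ g C := by
    intro A C hAC
    refine Finset.sum_le_sum fun i _ => ?_
    exact hHmono (Set.mem_Ici.mpr (hfnonneg i A)) (Set.mem_Ici.mpr (hfnonneg i C))
      (hfmono i A C hAC)
  -- submodularity of g (without the a ∉ C restriction)
  have hgsub : ∀ A C : Finset V, A ⊆ C → ∀ a,
      g (insert a C) - g C ≤ g (insert a A) - g A := by
    intro A C hAC a
    by_cases haC : a ∈ C
    · rw [Finset.insert_eq_self.mpr haC, sub_self]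
      have := hgmono A (insert a A) (Finset.subset_insert a A)
      linarith
    · have : ∀ i : Fin k,
          H (f i (insert a C)) - H (f i C) ≤ H (f i (insert a A)) - H (f i A) := by
        intro i
        set x := f i A
        set y := f i C
        set δ := f i (insert a A) - x with hδ
        set δ' := f i (insert a C) - y with hδ'
        have hδδ' : δ' ≤ δ := hfsub i A C hAC a haC
        have hδ'0 : 0 ≤ δ' := by
          have := hfmono i C (insert a C) (Finset.subset_insert a C); simp [hδ']; linarith
        have hxy : x ≤ y := hfmono i A C hAC
        have hx0 : 0 ≤ x := hfnonneg i A
        have step1 : H (y + δ') - H y ≤ H (x + δ') - H x :=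
          conc_shift hHconc hx0 hxy hδ'0
        have step2 : H (x + δ') ≤ H (x + δ) := by
          refine hHmono (Set.mem_Ici.mpr (by linarith)) (Set.mem_Ici.mpr ?_) (by linarith)
          have := hfnonneg i (insert a A); simp only [hδ]; linarith
        have e1 : f i (insert a C) = y + δ' := by simp [hδ']
        have e2 : f i (insert a A) = x + δ := by simp [hδ]
        rw [e1, e2]
        linarith
      have h1 := Finset.sum_le_sum (fun i (_ : i ∈ Finset.univ) => this i)
      simp only [Finset.sum_sub_distrib] at h1
      simpa [hg] using h1
  -- telescoping bound
  have htel : ∀ (D T : Finset V),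
      g (T ∪ D) ≤ g T + ∑ a ∈ D, (g (insert a T) - g T) := by
    intro D
    induction D using Finset.induction_on with
    | empty => intro T; simp
    | insert _ _ ha ih =>
      rename_i a D'
      intro T
      rw [Finset.union_insert, Finset.sum_insert ha]
      have h1 := hgsub T (T ∪ D') Finset.subset_union_left a
      have h2 := ih T
      linarith
  -- g is nonnegative
  have hgnn : ∀ S, 0 ≤ g S :=
    fun S => Finset.sum_nonneg fun i _ => hHnonneg _ (Set.mem_Ici.mpr (hfnonneg i S))
  have hBpos : (0:ℝ) < (B:ℝ) := by exact_mod_cast Nat.lt_of_lt_of_le Nat.zero_lt_one hB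
  -- one greedy step
  have hgstep : ∀ t, g Sstar - g (Shat (t+1)) ≤ (1 - 1/(B:ℝ)) * (g Sstar - g (Shat t)) := by
    intro t
    obtain ⟨a, ha1, ha2⟩ := hstep t
    set T := Shat t with hT
    set Δ := g (Shat (t+1)) - g T with hΔ
    have hΔ0 : 0 ≤ Δ := by
      have := hgmono T (insert a T) (Finset.subset_insert a T)
      rw [hΔ, ha1]; linarith
    have hterm : ∀ b ∈ Sstar, g (insert b T) - g T ≤ Δ := by
      intro b _
      have := ha2 b
      rw [hΔ, ha1]
      simp only [hg]
      linarith
    have hsum : ∑ b ∈ Sstar, (g (insert b T) - g T) ≤ (Sstar.card : ℝ) * Δ := by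
      calc ∑ b ∈ Sstar, (g (insert b T) - g T) ≤ ∑ _b ∈ Sstar, Δ :=
            Finset.sum_le_sum hterm
        _ = (Sstar.card : ℝ) * Δ := by rw [Finset.sum_const, nsmul_eq_mul]
    have hcard : (Sstar.card : ℝ) * Δ ≤ (B:ℝ) * Δ :=
      mul_le_mul_of_nonneg_right (by exact_mod_cast hScard) hΔ0
    have hm : g Sstar ≤ g (T ∪ Sstar) := hgmono _ _ Finset.subset_union_right
    have hBd : g Sstar - g T ≤ (B:ℝ) * Δ := by
      have := htel Sstar T
      linarith
    have hdiv : (g Sstar - g T) / (B:ℝ) ≤ Δ := by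
      rw [div_le_iff₀ hBpos]; linarith [mul_comm Δ (B:ℝ)]
    have e : (1 - 1/(B:ℝ)) * (g Sstar - g T) = (g Sstar - g T) - (g Sstar - g T)/(B:ℝ) := by
      ring
    rw [e]
    linarith
  have h1B : 0 ≤ 1 - 1/(B:ℝ) := by
    have : 1/(B:ℝ) ≤ 1 := by
      rw [div_le_one hBpos]; exact_mod_cast hB
    linarith
  -- induction
  have hind : ∀ t, g Sstar - g (Shat t) ≤ (1 - 1/(B:ℝ))^t * g Sstar := by
    intro t
    induction t with
    | zero =>
      have : g (Shat 0) = 0 := by simp [hg, h0, hfempty, hH0]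
      rw [this, pow_zero, one_mul]; linarith
    | succ t ih =>
      have h1 := hgstep t
      have h2 : (1 - 1/(B:ℝ)) * (g Sstar - g (Shat t)) ≤
          (1 - 1/(B:ℝ)) * ((1 - 1/(B:ℝ))^t * g Sstar) :=
        mul_le_mul_of_nonneg_left ih h1B
      calc g Sstar - g (Shat (t+1)) ≤ (1 - 1/(B:ℝ)) * (g Sstar - g (Shat t)) := h1
        _ ≤ (1 - 1/(B:ℝ)) * ((1 - 1/(B:ℝ))^t * g Sstar) := h2
        _ = (1 - 1/(B:ℝ))^(t+1) * g Sstar := by ring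
  -- (1 - 1/B)^B ≤ 1 / e
  have hexp : (1 - 1/(B:ℝ))^B ≤ 1 / Real.exp 1 := by
    have h1 : 1 - 1/(B:ℝ) ≤ Real.exp (-(1/(B:ℝ))) := by
      have := Real.add_one_le_exp (-(1/(B:ℝ)))
      linarith
    have h2 : (1 - 1/(B:ℝ))^B ≤ (Real.exp (-(1/(B:ℝ))))^B :=
      pow_le_pow_left₀ h1B h1 B
    have h3 : (Real.exp (-(1/(B:ℝ))))^B = Real.exp ((B:ℝ) * (-(1/(B:ℝ)))) :=
      (Real.exp_nat_mul _ B).symm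
    have h4 : (B:ℝ) * (-(1/(B:ℝ))) = -1 := by field_simp
    rw [h3, h4, Real.exp_neg] at h2
    simpa using h2
  have hBn : (1 - 1/(B:ℝ))^B * g Sstar ≤ (1 / Real.exp 1) * g Sstar :=
    mul_le_mul_of_nonneg_right hexp (hgnn Sstar)
  have hfinal : (1 - 1 / Real.exp 1) * g Sstar ≤ g (Shat B) := by
    have := hind B
    nlinarith
  -- subadditivity of H
  have hHsub : H (∑ i, f i Sstar) ≤ g Sstar :=
    H_sum_le hHconc hH0 Finset.univ (fun i => f i Sstar) (fun i => hfnonneg i Sstar)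
  have hone : 0 ≤ 1 - 1 / Real.exp 1 := by
    have h2 : (1:ℝ) ≤ Real.exp 1 := by
      have := Real.add_one_le_exp (1:ℝ); linarith
    have : 1 / Real.exp 1 ≤ 1 := by
      rw [div_le_one (Real.exp_pos 1)]; exact h2
    linarith
  calc (∑ i, H (f i (Shat B))) = g (Shat B) := rfl
    _ ≥ (1 - 1 / Real.exp 1) * g Sstar := hfinal
    _ ≥ (1 - 1 / Real.exp 1) * H (∑ i, f i Sstar) :=
        mul_le_mul_of_nonneg_left hHsub hone
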